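/- Let c ≥ 0 and 0 < x₁ < x₂, let M : [x₁, x₂] → [0, ∞) be continuous, and let y : [x₁, x₂] → ℝ be twice continuously differentiable with y(x₁) = y(x₂) = 0, y(x) > 0 for all x ∈ (x₁, x₂), y'(x₁) > 0, y'(x₂) < 0, and −y''(x) + ( c/x² )·y(x) = M(x)·y(x) on [x₁, x₂]. Then ∫_{x₁}^{x₂} x·M(x) dx ≥ √(4c + 1). -/
import Mathlib


open Set Filter MeasureTheory intervalIntegral Topology

set_option maxHeartbeats 1000000 in
/-- Quantitative core of the Bargmann-type bound: if a positive solution of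
`−y'' + (c/x²)y = M·y` vanishes at two consecutive points `x₁ < x₂`, then
`∫_{x₁}^{x₂} x·M(x) dx ≥ √(4c + 1)`. -/
theorem bargmann_core_estimate
    (c x₁ x₂ : ℝ) (hc : 0 ≤ c) (hx₁ : 0 < x₁) (hx₁₂ : x₁ < x₂)
    (M y yd ydd : ℝ → ℝ)
    (hM : ContinuousOn M (Set.Icc x₁ x₂))
    (hM0 : ∀ x ∈ Set.Icc x₁ x₂, 0 ≤ M x)
    (hy : ∀ x ∈ Set.Icc x₁ x₂, HasDerivAt y (yd x) x)
    (hyd : ∀ x ∈ Set.Icc x₁ x₂, HasDerivAt yd (ydd x) x)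
    (hydd : ContinuousOn ydd (Set.Icc x₁ x₂))
    (hy1 : y x₁ = 0) (hy2 : y x₂ = 0)
    (hypos : ∀ x ∈ Set.Ioo x₁ x₂, 0 < y x)
    (hyd1 : 0 < yd x₁) (hyd2 : yd x₂ < 0)
    (hode : ∀ x ∈ Set.Icc x₁ x₂, -ydd x + (c / x ^ 2) * y x = M x * y x) :
    Real.sqrt (4 * c + 1) ≤ ∫ x in x₁..x₂, x * M x := by
  have hx₂ : 0 < x₂ := hx₁.trans hx₁₂
  set r := Real.sqrt (c + 1/4) with hrdef
  have hr2 : r ^ 2 = c + 1/4 := Real.sq_sqrt (by linarith)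
  have hrhalf : (1:ℝ)/2 ≤ r := by
    nlinarith [Real.sqrt_nonneg (c + 1/4)]
  have hrpos : 0 < r := lt_of_lt_of_le (by norm_num) hrhalf
  set zp : ℝ := 1/2 + r with hzp
  set zm : ℝ := 1/2 - r with hzm
  have hzmzp : zm < zp := by simp only [hzm, hzp]; linarith
  have hIooIcc : Ioo x₁ x₂ ⊆ Icc x₁ x₂ := Ioo_subset_Icc_self
  have hycont : ContinuousOn y (Icc x₁ x₂) := fun t ht =>
    (hy t ht).continuousAt.continuousWithinAt
  have hydcont : ContinuousOn yd (Icc x₁ x₂) := fun t ht =>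
    (hyd t ht).continuousAt.continuousWithinAt
  set z : ℝ → ℝ := fun t => t * yd t / y t with hzdef
  set zd : ℝ → ℝ := fun t =>
    ((1 * yd t + t * ydd t) * y t - t * yd t * yd t) / (y t) ^ 2 with hzddef
  have hzderiv : ∀ t ∈ Ioo x₁ x₂, HasDerivAt z (zd t) t := by
    intro t ht
    exact ((hasDerivAt_id t).mul (hyd t (hIooIcc ht))).div (hy t (hIooIcc ht))
      (hypos t ht).ne'
  have hzcont : ContinuousOn z (Ioo x₁ x₂) := fun t ht =>
    (hzderiv t ht).continuousAt.continuousWithinAt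
  -- z → +∞ at x₁⁺
  have hmem1 : Ioo x₁ x₂ ∈ 𝓝[>] x₁ := Ioo_mem_nhdsGT_of_mem ⟨le_refl x₁, hx₁₂⟩
  have hmem2 : Ioo x₁ x₂ ∈ 𝓝[<] x₂ := Ioo_mem_nhdsLT_of_mem ⟨hx₁₂, le_refl x₂⟩
  have hztop : Tendsto z (𝓝[>] x₁) atTop := by
    have hy0 : Tendsto y (𝓝[>] x₁) (𝓝[>] (0:ℝ)) := by
      apply tendsto_nhdsWithin_of_tendsto_nhds_of_eventually_within
      · have := (hy x₁ ⟨le_refl x₁, hx₁₂.le⟩).continuousAt.tendsto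
        rw [hy1] at this
        exact this.mono_left nhdsWithin_le_nhds
      · filter_upwards [hmem1] with t ht using hypos t ht
    have hinv : Tendsto (fun t => (y t)⁻¹) (𝓝[>] x₁) atTop :=
      tendsto_inv_nhdsGT_zero.comp hy0
    have hnum : Tendsto (fun t => t * yd t) (𝓝[>] x₁) (𝓝 (x₁ * yd x₁)) :=
      ((continuousAt_id.mul (hyd x₁ ⟨le_refl x₁, hx₁₂.le⟩).continuousAt).tendsto).mono_left
        nhdsWithin_le_nhds
    have := hnum.pos_mul_atTop (by positivity) hinv
    simpa [hzdef, div_eq_mul_inv] using this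
  have hzbot : Tendsto z (𝓝[<] x₂) atBot := by
    have hy0 : Tendsto y (𝓝[<] x₂) (𝓝[>] (0:ℝ)) := by
      apply tendsto_nhdsWithin_of_tendsto_nhds_of_eventually_within
      · have := (hy x₂ ⟨hx₁₂.le, le_refl x₂⟩).continuousAt.tendsto
        rw [hy2] at this
        exact this.mono_left nhdsWithin_le_nhds
      · filter_upwards [hmem2] with t ht using hypos t ht
    have hinv : Tendsto (fun t => (y t)⁻¹) (𝓝[<] x₂) atTop :=
      tendsto_inv_nhdsGT_zero.comp hy0
    have hnum : Tendsto (fun t => t * yd t) (𝓝[<] x₂) (𝓝 (x₂ * yd x₂)) :=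
      ((continuousAt_id.mul (hyd x₂ ⟨hx₁₂.le, le_refl x₂⟩).continuousAt).tendsto).mono_left
        nhdsWithin_le_nhds
    have := hnum.neg_mul_atTop (mul_neg_of_pos_of_neg hx₂ hyd2) hinv
    simpa [hzdef, div_eq_mul_inv] using this
  -- pick a₀ with z a₀ > zp
  obtain ⟨a₀, ha₀I, ha₀z⟩ : ∃ t, t ∈ Ioo x₁ x₂ ∧ zp < z t := by
    have h1 : ∀ᶠ t in 𝓝[>] x₁, zp < z t := hztop.eventually (eventually_gt_atTop zp)
    have h2 : ∀ᶠ t in 𝓝[>] x₁, t ∈ Ioo x₁ x₂ := eventually_of_mem hmem1 (fun t ht => ht)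
    obtain ⟨t, ht1, ht2⟩ := (h2.and h1).exists
    exact ⟨t, ht1, ht2⟩
  -- pick b₀ ∈ (a₀, x₂) with z b₀ < zm
  obtain ⟨b₀, hb₀I, hb₀z⟩ : ∃ t, t ∈ Ioo a₀ x₂ ∧ z t < zm := by
    have h1 : ∀ᶠ t in 𝓝[<] x₂, z t < zm := hzbot.eventually (eventually_lt_atBot zm)
    have h2 : ∀ᶠ t in 𝓝[<] x₂, t ∈ Ioo a₀ x₂ :=
      eventually_of_mem (Ioo_mem_nhdsLT_of_mem ⟨ha₀I.2, le_refl x₂⟩) (fun t ht => ht)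
    obtain ⟨t, ht1, ht2⟩ := (h2.and h1).exists
    exact ⟨t, ht1, ht2⟩
  have hb₀I' : b₀ ∈ Ioo x₁ x₂ := ⟨ha₀I.1.trans hb₀I.1, hb₀I.2⟩
  have ha₀b₀ : a₀ ≤ b₀ := hb₀I.1.le
  have hsub0 : Icc a₀ b₀ ⊆ Ioo x₁ x₂ := fun t ht =>
    ⟨lt_of_lt_of_le ha₀I.1 ht.1, lt_of_le_of_lt ht.2 hb₀I'.2⟩
  have hzco : ContinuousOn z (Icc a₀ b₀) := hzcont.mono hsub0
  -- last crossing of zp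
  set S : Set ℝ := Icc a₀ b₀ ∩ z ⁻¹' {zp} with hSdef
  have hSclosed : IsClosed S := hzco.preimage_isClosed_of_isClosed isClosed_Icc isClosed_singleton
  have hSne : S.Nonempty := by
    obtain ⟨t, ht, hzt⟩ := intermediate_value_Icc' ha₀b₀ hzco
      (⟨by linarith [hb₀z], ha₀z.le⟩ : zp ∈ Icc (z b₀) (z a₀))
    exact ⟨t, ht, hzt⟩
  have hScpt : IsCompact S := isCompact_Icc.of_isClosed_subset hSclosed inter_subset_left
  set a := sSup S with hadef
  have haS : a ∈ S := hScpt.sSup_mem hSne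
  have haI : a ∈ Icc a₀ b₀ := haS.1
  have hza : z a = zp := haS.2
  -- for t ∈ (a, b₀], z t < zp
  have hlt_zp : ∀ t ∈ Ioc a b₀, z t < zp := by
    intro t ht
    by_contra h
    push_neg at h
    rcases eq_or_lt_of_le h with heq | hlt
    · have htS : t ∈ S := ⟨⟨haI.1.trans ht.1.le, ht.2⟩, heq.symm⟩
      exact absurd (le_csSup hScpt.bddAbove htS) (not_le.mpr ht.1)
    · obtain ⟨ξ, hξ, hzξ⟩ := intermediate_value_Icc' ht.2
        (hzco.mono (Icc_subset_Icc (haI.1.trans ht.1.le) le_rfl))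
        (⟨by linarith [hb₀z], hlt.le⟩ : zp ∈ Icc (z b₀) (z t))
      have hξS : ξ ∈ S := ⟨⟨haI.1.trans (ht.1.le.trans hξ.1), hξ.2⟩, hzξ⟩
      have hle : ξ ≤ a := le_csSup hScpt.bddAbove hξS
      have : a < a := lt_of_lt_of_le (lt_of_lt_of_le ht.1 hξ.1) hle
      exact absurd this (lt_irrefl a)
  -- first crossing of zm after a
  set T : Set ℝ := Icc a b₀ ∩ z ⁻¹' {zm} with hTdef
  have hzco2 : ContinuousOn z (Icc a b₀) := hzco.mono (Icc_subset_Icc haI.1 le_rfl)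
  have hTclosed : IsClosed T :=
    hzco2.preimage_isClosed_of_isClosed isClosed_Icc isClosed_singleton
  have hTne : T.Nonempty := by
    obtain ⟨t, ht, hzt⟩ := intermediate_value_Icc' haI.2 hzco2
      (⟨hb₀z.le, by rw [hza]; exact hzmzp.le⟩ : zm ∈ Icc (z b₀) (z a))
    exact ⟨t, ht, hzt⟩
  have hTcpt : IsCompact T := isCompact_Icc.of_isClosed_subset hTclosed inter_subset_left
  set b := sInf T with hbdef
  have hbT : b ∈ T := hTcpt.sInf_mem hTne
  have hbI : b ∈ Icc a b₀ := hbT.1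
  have hzb : z b = zm := hbT.2
  have hab : a < b := by
    rcases lt_or_eq_of_le hbI.1 with h | h
    · exact h
    · exfalso; rw [← h, hza] at hzb; exact absurd hzb (ne_of_gt hzmzp)
  -- for t ∈ [a, b), z t > zm
  have hgt_zm : ∀ t ∈ Ico a b, zm < z t := by
    intro t ht
    by_contra h
    push_neg at h
    rcases eq_or_lt_of_le h with heq | hlt
    · have htT : t ∈ T := ⟨⟨ht.1, ht.2.le.trans hbI.2⟩, heq⟩
      exact absurd (csInf_le hTcpt.bddBelow htT) (not_le.mpr ht.2)
    · obtain ⟨ξ, hξ, hzξ⟩ := intermediate_value_Icc' ht.1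
        (hzco2.mono (Icc_subset_Icc le_rfl (ht.2.le.trans hbI.2)))
        (⟨hlt.le, by rw [hza]; exact hzmzp.le⟩ : zm ∈ Icc (z t) (z a))
      have hξT : ξ ∈ T := ⟨⟨hξ.1, hξ.2.trans (ht.2.le.trans hbI.2)⟩, hzξ⟩
      have := csInf_le hTcpt.bddBelow hξT
      have : b < b := lt_of_le_of_lt this (lt_of_le_of_lt hξ.2 ht.2)
      exact absurd this (lt_irrefl b)
  have habIcc : Icc a b ⊆ Ioo x₁ x₂ := fun t ht =>
    hsub0 ⟨haI.1.trans ht.1, ht.2.trans hbI.2⟩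
  have habIcc' : Icc a b ⊆ Icc x₁ x₂ := habIcc.trans hIooIcc
  -- bounds for z on [a, b]
  have hzbound : ∀ t ∈ Icc a b, zm ≤ z t ∧ z t ≤ zp := by
    intro t ht
    constructor
    · rcases eq_or_lt_of_le ht.2 with h | h
      · rw [h, hzb]
      · exact (hgt_zm t ⟨ht.1, h⟩).le
    · rcases eq_or_lt_of_le ht.1 with h | h
      · rw [← h, hza]
      · exact (hlt_zp t ⟨h, ht.2.trans hbI.2⟩).le
  -- key pointwise inequality
  have hkey : ∀ t ∈ Icc a b, -(t * M t) ≤ zd t := by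
    intro t ht
    have htI : t ∈ Ioo x₁ x₂ := habIcc ht
    have hyt : 0 < y t := hypos t htI
    have htpos : 0 < t := hx₁.trans htI.1
    have hodet := hode t (hIooIcc htI)
    obtain ⟨hl, hu⟩ := hzbound t ht
    have hl' : zm * y t ≤ t * yd t := by
      have : zm ≤ t * yd t / y t := hl
      rwa [le_div_iff₀ hyt] at this
    have hu' : t * yd t ≤ zp * y t := by
      have : t * yd t / y t ≤ zp := hu
      rwa [div_le_iff₀ hyt] at this
    have hA : 0 ≤ zp * y t - t * yd t := by linarith
    have hB : 0 ≤ t * yd t - zm * y t := by linarith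
    have hAB := mul_nonneg hA hB
    -- zp*zm = 1/4 - r^2 = -c
    have hyddt : ydd t = (c / t ^ 2) * y t - M t * y t := by linarith
    simp only [hzp, hzm] at hAB
    have hA' : 0 ≤ c * y t ^ 2 + t * yd t * y t - t ^ 2 * yd t ^ 2 := by
      nlinarith [hAB, hr2, sq_nonneg (y t)]
    have h3 : t * (yd t * y t + t * (c / t ^ 2) * y t ^ 2 - t * yd t ^ 2)
        = c * y t ^ 2 + t * yd t * y t - t ^ 2 * yd t ^ 2 := by
      field_simp
      ring
    have h4 : 0 ≤ t * (yd t * y t + t * (c / t ^ 2) * y t ^ 2 - t * yd t ^ 2) := by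
      rw [h3]; exact hA'
    have hgoal2 : 0 ≤ yd t * y t + t * (c / t ^ 2) * y t ^ 2 - t * yd t ^ 2 :=
      le_of_mul_le_mul_left (by simp only [mul_zero]; exact h4) htpos
    show -(t * M t) ≤ ((1 * yd t + t * ydd t) * y t - t * yd t * yd t) / (y t) ^ 2
    rw [le_div_iff₀ (by positivity : (0:ℝ) < (y t) ^ 2)]
    rw [hyddt]
    linarith [hgoal2]
  -- integrability and FTC
  have hzdcont : ContinuousOn zd (Icc a b) := by
    apply ContinuousOn.div
    · exact (((continuousOn_const.mul (hydcont.mono habIcc')).add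
        (continuousOn_id.mul (hydd.mono habIcc'))).mul (hycont.mono habIcc')).sub
        ((continuousOn_id.mul (hydcont.mono habIcc')).mul (hydcont.mono habIcc'))
    · exact (hycont.mono habIcc').pow 2
    · exact fun t ht => pow_ne_zero 2 (hypos t (habIcc ht)).ne'
  have hintzd : IntervalIntegrable zd volume a b :=
    (hzdcont.mono (by rw [uIcc_of_le hab.le])).intervalIntegrable
  have hintM : IntervalIntegrable (fun t => -(t * M t)) volume a b := by
    apply ContinuousOn.intervalIntegrable
    rw [uIcc_of_le hab.le]
    exact ((continuousOn_id.mul (hM.mono habIcc')).neg)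
  have hFTC : ∫ t in a..b, zd t = z b - z a := by
    apply intervalIntegral.integral_eq_sub_of_hasDerivAt
    · intro t ht
      rw [uIcc_of_le hab.le] at ht
      exact hzderiv t (habIcc ht)
    · exact hintzd
  have hmono1 : ∫ t in a..b, -(t * M t) ≤ ∫ t in a..b, zd t :=
    intervalIntegral.integral_mono_on hab.le hintM hintzd hkey
  have hint_ab : 2 * r ≤ ∫ t in a..b, t * M t := by
    have hneg : ∫ t in a..b, -(t * M t) = -∫ t in a..b, t * M t := by
      simpa using intervalIntegral.integral_neg (f := fun t => t * M t) (a := a) (b := b)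
    rw [hneg, hFTC, hzb, hza] at hmono1
    simp only [hzm, hzp] at hmono1
    linarith
  -- monotonicity of integral
  have hintfull : IntervalIntegrable (fun t => t * M t) volume x₁ x₂ := by
    apply ContinuousOn.intervalIntegrable
    rw [uIcc_of_le hx₁₂.le]
    exact continuousOn_id.mul hM
  have hae : 0 ≤ᵐ[volume.restrict (Ioc x₁ x₂)] fun t => t * M t := by
    filter_upwards [self_mem_ae_restrict measurableSet_Ioc] with t ht
    exact mul_nonneg (hx₁.trans ht.1).le (hM0 t ⟨ht.1.le, ht.2⟩)
  have hmono2 : ∫ t in a..b, t * M t ≤ ∫ t in x₁..x₂, t * M t :=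
    intervalIntegral.integral_mono_interval (habIcc ⟨le_rfl, hab.le⟩).1.le hab.le
      (habIcc ⟨hab.le, le_rfl⟩).2.le hae hintfull
  have hsqrt : Real.sqrt (4 * c + 1) = 2 * r := by
    rw [hrdef, show (4 * c + 1 : ℝ) = 4 * (c + 1/4) by ring,
      Real.sqrt_mul (by norm_num : (0:ℝ) ≤ 4),
      show (4:ℝ) = 2 ^ 2 by norm_num, Real.sqrt_sq (by norm_num : (0:ℝ) ≤ 2)]
  linarith
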